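/- Let n ≥ 1, let k = (k_1,...,k_n) ∈ ℤ^n and let 1 ≤ i < j ≤ n. Let L_n(k) denote the sum of the signs of all generalized Gelfand-Tsetlin patterns of order n with bottom row k, and let k' be obtained from k by replacing k_i with k_j + j − i and k_j with k_i + i − j. Then L_n(k) = −L_n(k'). -/

import Mathlib

/-- A generalized Gelfand-Tsetlin pattern of order `n`: a triangular array
`(a_{i,j})_{1 ≤ j ≤ i ≤ n}` (row `i : Fin n` has `i + 1` entries) such that for every
entry `a_{i,j}` with `i ≤ n - 1`: if `a_{i+1,j} ≤ a_{i+1,j+1}` then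
`a_{i+1,j} ≤ a_{i,j} ≤ a_{i+1,j+1}`, and if `a_{i+1,j} > a_{i+1,j+1}` then
`a_{i+1,j} > a_{i,j} > a_{i+1,j+1}`. -/
def IsGenGT {n : ℕ} (a : ∀ i : Fin n, Fin (i.1 + 1) → ℤ) : Prop :=
  ∀ i : Fin n, ∀ hi : i.1 + 1 < n, ∀ j : Fin (i.1 + 1),
    if a ⟨i.1 + 1, hi⟩ ⟨j.1, by have := j.isLt; show j.1 < i.1 + 1 + 1; omega⟩ ≤
        a ⟨i.1 + 1, hi⟩ ⟨j.1 + 1, by have := j.isLt; show j.1 + 1 < i.1 + 1 + 1; omega⟩ then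
      a ⟨i.1 + 1, hi⟩ ⟨j.1, by have := j.isLt; show j.1 < i.1 + 1 + 1; omega⟩ ≤ a i j ∧
        a i j ≤ a ⟨i.1 + 1, hi⟩ ⟨j.1 + 1, by have := j.isLt; show j.1 + 1 < i.1 + 1 + 1; omega⟩
    else
      a ⟨i.1 + 1, hi⟩ ⟨j.1 + 1, by have := j.isLt; show j.1 + 1 < i.1 + 1 + 1; omega⟩ < a i j ∧
        a i j < a ⟨i.1 + 1, hi⟩ ⟨j.1, by have := j.isLt; show j.1 < i.1 + 1 + 1; omega⟩

/-- The number of inversions of a generalized Gelfand-Tsetlin pattern: entries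
`a_{i,j}` with `a_{i+1,j} > a_{i+1,j+1}`. -/
noncomputable def genGTInvCount {n : ℕ} (a : ∀ i : Fin n, Fin (i.1 + 1) → ℤ) : ℕ :=
  ∑ i : Fin n,
    if hi : i.1 + 1 < n then
      (Finset.univ.filter (fun j : Fin (i.1 + 1) =>
        a ⟨i.1 + 1, hi⟩ ⟨j.1 + 1, by have := j.isLt; show j.1 + 1 < i.1 + 1 + 1; omega⟩ <
          a ⟨i.1 + 1, hi⟩ ⟨j.1, by have := j.isLt; show j.1 < i.1 + 1 + 1; omega⟩)).card
    else 0

/-- The bottom row (row `n`) of a triangular array equals `k`. -/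
def BottomRow {n : ℕ} (a : ∀ i : Fin n, Fin (i.1 + 1) → ℤ) (k : Fin n → ℤ) : Prop :=
  ∀ i : Fin n, i.1 + 1 = n → ∀ j : Fin (i.1 + 1),
    a i j = k ⟨j.1, by have := j.isLt; omega⟩

/-- The signed enumeration of all generalized Gelfand-Tsetlin patterns of order `n`
with bottom row `k`, each pattern counted with sign `(-1) ^ (number of inversions)`. -/
noncomputable def LgenGT (n : ℕ) (k : Fin n → ℤ) : ℤ :=
  ∑ᶠ a ∈ {a : ∀ i : Fin n, Fin (i.1 + 1) → ℤ | IsGenGT a ∧ BottomRow a k},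
    (-1 : ℤ) ^ genGTInvCount a


/-- signed interval indicator -/
def wI (a b x : ℤ) : ℤ := (if x ≤ b then 1 else 0) - (if x ≤ a - 1 then 1 else 0)

lemma wI_sym (a b x : ℤ) : wI (b + 1) (a - 1) x = - wI a b x := by
  simp only [wI, add_sub_cancel_right]; ring

lemma wI_telescope (a b c x : ℤ) : wI a c x = wI a b x + wI (b + 1) c x := by
  simp only [wI, add_sub_cancel_right]; ring

lemma wI_shift (a b x : ℤ) : wI (a + 1) (b + 1) x = wI a b (x - 1) := by
  simp only [wI, add_sub_cancel_right]
  split_ifs <;> omega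

lemma wI_shift' (a b x : ℤ) : wI (a - 1) (b - 1) x = wI a b (x + 1) := by
  have := wI_shift (a - 1) (b - 1) (x + 1)
  simp only [sub_add_cancel, add_sub_cancel_right] at this
  rw [← this]

lemma wI_support (a b : ℤ) : (Function.support (wI a b)).Finite := by
  apply (Set.finite_Icc (min a (b + 1)) (max b (a - 1))).subset
  intro x hx
  simp only [Function.mem_support, wI] at hx
  simp only [Set.mem_Icc, le_max_iff, min_le_iff]
  split_ifs at hx with h1 h2 <;> omega

/-- product of single-variable factors -/
def PgF {m : ℕ} (g : Fin m → ℤ → ℤ) (l : Fin m → ℤ) : ℤ := ∏ t, g t (l t)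

lemma PgF_update {m : ℕ} (g : Fin m → ℤ → ℤ) (t : Fin m) (u : ℤ → ℤ) (l : Fin m → ℤ) :
    PgF (Function.update g t u) l =
      u (l t) * ∏ r ∈ Finset.univ.erase t, g r (l r) := by
  unfold PgF
  rw [← Finset.mul_prod_erase Finset.univ _ (Finset.mem_univ t)]
  rw [Function.update_self]
  congr 1
  apply Finset.prod_congr rfl
  intro r hr
  rw [Function.update_of_ne (Finset.ne_of_mem_erase hr)]

lemma PgF_update_add {m : ℕ} (g : Fin m → ℤ → ℤ) (t : Fin m) (u v : ℤ → ℤ) (l : Fin m → ℤ) :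
    PgF (Function.update g t (fun x => u x + v x)) l =
      PgF (Function.update g t u) l + PgF (Function.update g t v) l := by
  rw [PgF_update, PgF_update, PgF_update]; ring

lemma PgF_update_neg {m : ℕ} (g : Fin m → ℤ → ℤ) (t : Fin m) (u : ℤ → ℤ) (l : Fin m → ℤ) :
    PgF (Function.update g t (fun x => - u x)) l = - PgF (Function.update g t u) l := by
  rw [PgF_update, PgF_update]; ring

lemma PgF_mul_support_finite {m : ℕ} (g : Fin m → ℤ → ℤ)
    (hg : ∀ t, (Function.support (g t)).Finite) (G : (Fin m → ℤ) → ℤ) :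
    (Function.support fun l : Fin m → ℤ => PgF g l * G l).Finite := by
  apply (Set.Finite.pi fun t => hg t).subset
  intro l hl
  simp only [Function.mem_support] at hl
  have hP : PgF g l ≠ 0 := fun h => hl (by rw [h, zero_mul])
  unfold PgF at hP
  rw [Finset.prod_ne_zero_iff] at hP
  intro t _
  exact hP t (Finset.mem_univ t)

/-- recursive signed enumeration -/
noncomputable def Lrec : (n : ℕ) → (Fin (n + 1) → ℤ) → ℤ
  | 0, _ => 1
  | n + 1, k => ∑ᶠ l : Fin (n + 1) → ℤ,
      PgF (fun t => wI (k t.castSucc) (k t.succ)) l * Lrec n l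

noncomputable def Sg (n : ℕ) (g : Fin (n + 1) → ℤ → ℤ) : ℤ :=
  ∑ᶠ l : Fin (n + 1) → ℤ, PgF g l * Lrec n l

lemma Lrec_succ (n : ℕ) (k : Fin (n + 2) → ℤ) :
    Lrec (n + 1) k = Sg n (fun t => wI (k t.castSucc) (k t.succ)) := rfl

/-- update everywhere finite supports -/
lemma update_support_finite {n : ℕ} {g : Fin (n + 1) → ℤ → ℤ}
    (hg : ∀ r, (Function.support (g r)).Finite) {t : Fin (n + 1)} {u : ℤ → ℤ}
    (hu : (Function.support u).Finite) :
    ∀ r, (Function.support (Function.update g t u r)).Finite := by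
  intro r
  rcases eq_or_ne r t with rfl | hrt
  · rwa [Function.update_self]
  · rw [Function.update_of_ne hrt]; exact hg r

lemma Sg_update_add {n : ℕ} (g : Fin (n + 1) → ℤ → ℤ)
    (hg : ∀ r, (Function.support (g r)).Finite) (t : Fin (n + 1)) (u v : ℤ → ℤ)
    (hu : (Function.support u).Finite) (hv : (Function.support v).Finite) :
    Sg n (Function.update g t (fun x => u x + v x)) =
      Sg n (Function.update g t u) + Sg n (Function.update g t v) := by
  unfold Sg
  rw [← finsum_add_distrib
    (PgF_mul_support_finite _ (update_support_finite hg hu) _)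
    (PgF_mul_support_finite _ (update_support_finite hg hv) _)]
  apply finsum_congr
  intro l
  rw [PgF_update_add, add_mul]

lemma Sg_update_neg {n : ℕ} (g : Fin (n + 1) → ℤ → ℤ) (t : Fin (n + 1)) (u : ℤ → ℤ) :
    Sg n (Function.update g t (fun x => - u x)) = - Sg n (Function.update g t u) := by
  unfold Sg
  rw [← finsum_neg_distrib]
  apply finsum_congr
  intro l
  rw [PgF_update_neg, neg_mul]

/-- the adjacent shifted swap on vectors -/
def adjSwap {n : ℕ} (s : Fin n) (k : Fin (n + 1) → ℤ) : Fin (n + 1) → ℤ := fun t =>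
  if t.1 = s.1 then k s.succ + 1 else if t.1 = s.1 + 1 then k s.castSucc - 1 else k t

lemma adjSwap_apply_castSucc {n : ℕ} (s : Fin n) (k : Fin (n + 1) → ℤ) :
    adjSwap s k s.castSucc = k s.succ + 1 := by
  simp [adjSwap]

lemma adjSwap_apply_succ {n : ℕ} (s : Fin n) (k : Fin (n + 1) → ℤ) :
    adjSwap s k s.succ = k s.castSucc - 1 := by
  simp [adjSwap]

lemma adjSwap_apply_other {n : ℕ} (s : Fin n) (k : Fin (n + 1) → ℤ) (t : Fin (n + 1))
    (h1 : t.1 ≠ s.1) (h2 : t.1 ≠ s.1 + 1) : adjSwap s k t = k t := by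
  simp [adjSwap, h1, h2]

lemma adjSwap_involutive {n : ℕ} (s : Fin n) (l : Fin (n + 1) → ℤ) :
    adjSwap s (adjSwap s l) = l := by
  funext t
  by_cases h1 : t.1 = s.1
  · have ht : t = s.castSucc := Fin.ext h1
    subst ht
    rw [adjSwap_apply_castSucc, adjSwap_apply_succ]; ring
  · by_cases h2 : t.1 = s.1 + 1
    · have ht : t = s.succ := Fin.ext h2
      subst ht
      rw [adjSwap_apply_succ, adjSwap_apply_castSucc]; ring
    · rw [adjSwap_apply_other _ _ _ h1 h2, adjSwap_apply_other _ _ _ h1 h2]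
lemma adjSwap_apply_val_eq {n : ℕ} (s : Fin n) (k : Fin (n + 1) → ℤ) (t : Fin (n + 1))
    (h : t.1 = s.1) : adjSwap s k t = k s.succ + 1 := by simp [adjSwap, h]

lemma adjSwap_apply_val_eq' {n : ℕ} (s : Fin n) (k : Fin (n + 1) → ℤ) (t : Fin (n + 1))
    (h : t.1 = s.1 + 1) : adjSwap s k t = k s.castSucc - 1 := by
  have h2 : t.1 ≠ s.1 := by omega
  simp [adjSwap, h, h2]

lemma wI_p (a b c x : ℤ) : wI c (b + 1) x = wI c a x + wI a b (x - 1) := by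
  rw [wI_telescope c a (b + 1) x, wI_shift]

lemma wI_q (a b c x : ℤ) : wI (a - 1) c x = wI b c x + wI a b (x + 1) := by
  rw [wI_telescope (a - 1) (b - 1) c x, sub_add_cancel, wI_shift']; ring

lemma support_comp_finite {h : ℤ → ℤ} (hf : (Function.support h).Finite) (σ : ℤ → ℤ)
    (hσ : Function.Injective σ) : (Function.support fun x => h (σ x)).Finite := by
  have : (Function.support fun x => h (σ x)) = σ ⁻¹' Function.support h := rfl
  rw [this]
  exact hf.preimage (Set.injOn_of_injective hσ)

lemma support_add_finite {u v : ℤ → ℤ} (hu : (Function.support u).Finite)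
    (hv : (Function.support v).Finite) :
    (Function.support fun x => u x + v x).Finite := by
  apply (hu.union hv).subset
  intro x hx
  simp only [Function.mem_support] at hx
  by_contra hmem
  simp only [Set.mem_union, Function.mem_support, not_or, not_not] at hmem
  rw [hmem.1, hmem.2] at hx
  exact hx (add_zero 0)

lemma support_neg_finite {u : ℤ → ℤ} (hu : (Function.support u).Finite) :
    (Function.support fun x => - u x).Finite := by
  apply hu.subset
  intro x hx
  simp only [Function.mem_support, neg_ne_zero] at hx
  exact hx

lemma Sg_update_add' {n : ℕ} (g : Fin (n + 1) → ℤ → ℤ)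
    (hg : ∀ r, (Function.support (g r)).Finite) (t : Fin (n + 1)) (u v w' : ℤ → ℤ)
    (hu : (Function.support u).Finite) (hv : (Function.support v).Finite)
    (hw : ∀ x, w' x = u x + v x) :
    Sg n (Function.update g t w') =
      Sg n (Function.update g t u) + Sg n (Function.update g t v) := by
  have : w' = fun x => u x + v x := funext hw
  rw [this]
  exact Sg_update_add g hg t u v hu hv

lemma Sg_update_neg' {n : ℕ} (g : Fin (n + 1) → ℤ → ℤ) (t : Fin (n + 1)) (u w' : ℤ → ℤ)
    (hw : ∀ x, w' x = - u x) :
    Sg n (Function.update g t w') = - Sg n (Function.update g t u) := by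
  have : w' = fun x => - u x := funext hw
  rw [this]
  exact Sg_update_neg g t u

lemma PgF_adjSwap_invariant {n : ℕ} (g : Fin (n + 1) → ℤ → ℤ) (p : Fin n)
    (hswap : ∀ x y : ℤ, g p.castSucc (y + 1) * g p.succ (x - 1) =
      g p.castSucc x * g p.succ y) (l : Fin (n + 1) → ℤ) :
    PgF g (adjSwap p l) = PgF g l := by
  have hcs : p.castSucc ≠ p.succ := by
    intro h
    have := congrArg Fin.val h
    simp [Fin.val_succ] at this
  have hmem : p.succ ∈ Finset.univ.erase p.castSucc :=
    Finset.mem_erase.2 ⟨hcs.symm, Finset.mem_univ _⟩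
  have expand : ∀ v : Fin (n + 1) → ℤ, PgF g v =
      g p.castSucc (v p.castSucc) * (g p.succ (v p.succ) *
        ∏ r ∈ (Finset.univ.erase p.castSucc).erase p.succ, g r (v r)) := by
    intro v
    unfold PgF
    rw [← Finset.mul_prod_erase Finset.univ _ (Finset.mem_univ p.castSucc),
      ← Finset.mul_prod_erase _ _ hmem]
  rw [expand, expand]
  have h1 : adjSwap p l p.castSucc = l p.succ + 1 := adjSwap_apply_castSucc p l
  have h2 : adjSwap p l p.succ = l p.castSucc - 1 := adjSwap_apply_succ p l
  rw [h1, h2]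
  have hrest : ∀ r ∈ (Finset.univ.erase p.castSucc).erase p.succ,
      g r (adjSwap p l r) = g r (l r) := by
    intro r hr
    have hr1 : r ≠ p.succ := (Finset.mem_erase.1 hr).1
    have hr2 : r ≠ p.castSucc := (Finset.mem_erase.1 (Finset.mem_erase.1 hr).2).1
    rw [adjSwap_apply_other p l r (fun hv => hr2 (Fin.ext hv))
      (fun hv => hr1 (Fin.ext (by simpa [Fin.val_succ] using hv)))]
  rw [Finset.prod_congr rfl hrest]
  rw [← mul_assoc, ← mul_assoc, hswap (l p.castSucc) (l p.succ)]

lemma Sg_vanish {n : ℕ}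
    (IH : ∀ (s : Fin n) (k : Fin (n + 1) → ℤ), Lrec n (adjSwap s k) = - Lrec n k)
    (g : Fin (n + 1) → ℤ → ℤ) (p : Fin n)
    (hswap : ∀ x y : ℤ, g p.castSucc (y + 1) * g p.succ (x - 1) =
      g p.castSucc x * g p.succ y) :
    Sg n g = 0 := by
  set F : (Fin (n + 1) → ℤ) → ℤ := fun l => PgF g l * Lrec n l with hF
  let ψ : (Fin (n + 1) → ℤ) ≃ (Fin (n + 1) → ℤ) :=
    ⟨adjSwap p, adjSwap p, adjSwap_involutive p, adjSwap_involutive p⟩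
  have key : ∀ l, F (ψ l) = - F l := by
    intro l
    show PgF g (adjSwap p l) * Lrec n (adjSwap p l) = -(PgF g l * Lrec n l)
    rw [PgF_adjSwap_invariant g p hswap l, IH p l]
    ring
  have h1 : Sg n g = ∑ᶠ l, F (ψ l) := (finsum_comp_equiv ψ).symm
  have h2 : (∑ᶠ l, F (ψ l)) = - Sg n g := by
    rw [finsum_congr key, finsum_neg_distrib]
    rfl
  have := h1.trans h2
  linarith

/-- splitting lemma: absorbing the `q`-side correction term -/
lemma Sg_split_q {n : ℕ}
    (IH : ∀ (s : Fin n) (k : Fin (n + 1) → ℤ), Lrec n (adjSwap s k) = - Lrec n k)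
    (G : Fin (n + 1) → ℤ → ℤ) (hG : ∀ r, (Function.support (G r)).Finite)
    (s q : Fin (n + 1)) (hq : q.1 = s.1 + 1) (hqn : s.1 < n) (a b : ℤ)
    (hGs : G s = fun x => - wI a b x) (u w' : ℤ → ℤ) (hu : (Function.support u).Finite)
    (hw : ∀ x, w' x = u x + wI a b (x + 1)) :
    Sg n (Function.update G q w') = Sg n (Function.update G q u) := by
  have hsq : s ≠ q := Fin.ne_of_val_ne (by omega)
  rw [Sg_update_add' G hG q u (fun x => wI a b (x + 1)) _ hu
    (support_comp_finite (wI_support a b) _ (fun x y hxy => by omega)) hw]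
  have hz : Sg n (Function.update G q (fun x => wI a b (x + 1))) = 0 := by
    apply Sg_vanish IH _ ⟨s.1, hqn⟩
    have e1 : (⟨s.1, hqn⟩ : Fin n).castSucc = s := Fin.ext rfl
    have e2 : (⟨s.1, hqn⟩ : Fin n).succ = q := Fin.ext (by simp [hq])
    intro x y
    rw [e1, e2, Function.update_of_ne hsq, hGs, Function.update_self]
    simp only [sub_add_cancel]
    ring
  rw [hz, add_zero]

/-- splitting lemma: absorbing the `p`-side correction term -/
lemma Sg_split_p {n : ℕ}
    (IH : ∀ (s : Fin n) (k : Fin (n + 1) → ℤ), Lrec n (adjSwap s k) = - Lrec n k)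
    (G : Fin (n + 1) → ℤ → ℤ) (hG : ∀ r, (Function.support (G r)).Finite)
    (s p : Fin (n + 1)) (hp : p.1 + 1 = s.1) (hpn : p.1 < n) (a b : ℤ)
    (hGs : G s = fun x => - wI a b x) (u w' : ℤ → ℤ) (hu : (Function.support u).Finite)
    (hw : ∀ x, w' x = u x + wI a b (x - 1)) :
    Sg n (Function.update G p w') = Sg n (Function.update G p u) := by
  have hsp : s ≠ p := Fin.ne_of_val_ne (by omega)
  rw [Sg_update_add' G hG p u (fun x => wI a b (x - 1)) _ hu
    (support_comp_finite (wI_support a b) _ (fun x y hxy => by omega)) hw]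
  have hz : Sg n (Function.update G p (fun x => wI a b (x - 1))) = 0 := by
    apply Sg_vanish IH _ ⟨p.1, hpn⟩
    have e1 : (⟨p.1, hpn⟩ : Fin n).castSucc = p := Fin.ext rfl
    have e2 : (⟨p.1, hpn⟩ : Fin n).succ = s := Fin.ext (by simp [hp])
    intro x y
    rw [e1, e2, Function.update_self, Function.update_of_ne hsp, hGs]
    simp only [add_sub_cancel_right]
    ring
  rw [hz, add_zero]
theorem Lrec_adjSwap : ∀ (n : ℕ) (s : Fin n) (k : Fin (n + 1) → ℤ),
    Lrec n (adjSwap s k) = - Lrec n k := by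
  intro n
  induction n with
  | zero => exact fun s => s.elim0
  | succ n IH =>
    intro s k
    rw [Lrec_succ, Lrec_succ]
    have hsn : s.1 ≤ n := by omega
    set a : ℤ := k s.castSucc with ha
    set b : ℤ := k s.succ with hb
    set g0 : Fin (n + 1) → ℤ → ℤ := fun t => wI (k t.castSucc) (k t.succ) with hg0
    have hfin0 : ∀ r, (Function.support (g0 r)).Finite := fun r => wI_support _ _
    have hfinh : (Function.support (wI a b)).Finite := wI_support a b
    have hfinn : (Function.support fun x => - wI a b x).Finite := support_neg_finite hfinh
    have hfine : (Function.support fun x => wI a b (x - 1)).Finite :=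
      support_comp_finite hfinh _ (fun u v huv => by omega)
    have hfind : (Function.support fun x => wI a b (x + 1)).Finite :=
      support_comp_finite hfinh _ (fun u v huv => by omega)
    have hg0s : g0 s = wI a b := rfl
    -- pointwise description of the swapped weights
    have hval : ∀ t : Fin (n + 1),
        (fun x => wI (adjSwap s k t.castSucc) (adjSwap s k t.succ) x) =
        if t = s then (fun x => - wI a b x)
        else if t.1 + 1 = s.1 then (fun x => g0 t x + wI a b (x - 1))
        else if t.1 = s.1 + 1 then (fun x => g0 t x + wI a b (x + 1))
        else g0 t := by
      intro t
      by_cases hts : t = s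
      · rw [if_pos hts]
        funext x
        rw [adjSwap_apply_val_eq s k t.castSucc (by rw [hts]; simp),
          adjSwap_apply_val_eq' s k t.succ (by rw [hts]; simp [Fin.val_succ]),
          ← ha, ← hb, wI_sym]
      · rw [if_neg hts]
        have htsv : t.1 ≠ s.1 := fun hv => hts (Fin.ext hv)
        by_cases htp : t.1 + 1 = s.1
        · rw [if_pos htp]
          funext x
          rw [adjSwap_apply_other s k t.castSucc (by simpa using htsv) (by simp; omega),
            adjSwap_apply_val_eq s k t.succ (by simpa [Fin.val_succ] using htp), ← hb]
          have hcs : a = k t.succ := by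
            rw [ha]; congr 1; exact Fin.ext (by simp [Fin.val_succ]; omega)
          show wI (k t.castSucc) (b + 1) x = wI (k t.castSucc) (k t.succ) x + wI a b (x - 1)
          rw [wI_p a b (k t.castSucc) x, hcs]
        · rw [if_neg htp]
          by_cases htq : t.1 = s.1 + 1
          · rw [if_pos htq]
            funext x
            rw [adjSwap_apply_val_eq' s k t.castSucc (by simpa using htq),
              adjSwap_apply_other s k t.succ (by simp [Fin.val_succ]; omega)
                (by simp [Fin.val_succ]; omega), ← ha]
            have hcs : b = k t.castSucc := by
              rw [hb]; congr 1; exact Fin.ext (by simp [Fin.val_succ]; omega)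
            show wI (a - 1) (k t.succ) x = wI (k t.castSucc) (k t.succ) x + wI a b (x + 1)
            rw [wI_q a b (k t.succ) x, hcs]
          · rw [if_neg htq]
            funext x
            rw [adjSwap_apply_other s k t.castSucc (by simpa using htsv) (by simp; omega),
              adjSwap_apply_other s k t.succ (by simp [Fin.val_succ]; omega)
                (by simp [Fin.val_succ]; omega)]
    by_cases hs0 : 0 < s.1
    · by_cases hsq : s.1 < n
      · -- both neighbours present
        set p : Fin (n + 1) := ⟨s.1 - 1, by omega⟩ with hpdef
        set q : Fin (n + 1) := ⟨s.1 + 1, by omega⟩ with hqdef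
        have hpval : (p : ℕ) = s.1 - 1 := rfl
        have hqval : (q : ℕ) = s.1 + 1 := rfl
        have hps : p ≠ s := Fin.ne_of_val_ne (by omega)
        have hqs : q ≠ s := Fin.ne_of_val_ne (by omega)
        have hqp : q ≠ p := Fin.ne_of_val_ne (by omega)
        set G2 : Fin (n + 1) → ℤ → ℤ := Function.update g0 s (fun x => - wI a b x) with hG2
        set G1 : Fin (n + 1) → ℤ → ℤ :=
          Function.update G2 p (fun x => g0 p x + wI a b (x - 1)) with hG1
        have hfin2 : ∀ r, (Function.support (G2 r)).Finite :=
          update_support_finite hfin0 hfinn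
        have hfin1 : ∀ r, (Function.support (G1 r)).Finite :=
          update_support_finite hfin2 (support_add_finite (hfin0 p) hfine)
        have hGfun : (fun t => wI (adjSwap s k t.castSucc) (adjSwap s k t.succ)) =
            Function.update G1 q (fun x => g0 q x + wI a b (x + 1)) := by
          funext t
          have this1 := hval t
          rw [show (fun x => wI (adjSwap s k t.castSucc) (adjSwap s k t.succ) x) =
            wI (adjSwap s k t.castSucc) (adjSwap s k t.succ) from rfl] at this1
          rw [this1]
          by_cases h1 : t = q
          · rw [h1, Function.update_self, if_neg hqs, if_neg (by omega), if_pos (by omega),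
              hqdef]
          · rw [Function.update_of_ne h1]
            by_cases h2 : t = p
            · rw [h2, hG1, Function.update_self, if_neg hps, if_pos (by omega), hpdef]
            · rw [hG1, Function.update_of_ne h2]
              by_cases h3 : t = s
              · rw [h3, hG2, Function.update_self, if_pos rfl]
              · rw [hG2, Function.update_of_ne h3, if_neg h3,
                  if_neg (fun hv => h2 (Fin.ext (by omega))),
                  if_neg (fun hv => h1 (Fin.ext (by omega)))]
        rw [hGfun]
        have hG1s : G1 s = fun x => - wI a b x := by
          rw [hG1, Function.update_of_ne (Ne.symm hps), hG2, Function.update_self]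
        rw [Sg_split_q IH G1 hfin1 s q hqval hsq a b hG1s (g0 q) _ (hfin0 q) (fun x => rfl)]
        have e1 : Function.update G1 q (g0 q) = G1 := by
          have hq1 : g0 q = G1 q := by
            rw [hG1, Function.update_of_ne hqp, hG2, Function.update_of_ne hqs]
          rw [hq1, Function.update_eq_self]
        rw [e1, hG1]
        have hG2s : G2 s = fun x => - wI a b x := by rw [hG2, Function.update_self]
        rw [Sg_split_p IH G2 hfin2 s p (by omega) (by omega) a b hG2s
          (g0 p) _ (hfin0 p) (fun x => rfl)]
        have e2 : Function.update G2 p (g0 p) = G2 := by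
          have hp1 : g0 p = G2 p := by rw [hG2, Function.update_of_ne hps]
          rw [hp1, Function.update_eq_self]
        rw [e2, hG2, Sg_update_neg' g0 s (wI a b) _ (fun x => rfl), ← hg0s,
          Function.update_eq_self]
      · -- only the `p` neighbour present (s.1 = n)
        have hsn' : s.1 = n := by omega
        set p : Fin (n + 1) := ⟨s.1 - 1, by omega⟩ with hpdef
        have hpval : (p : ℕ) = s.1 - 1 := rfl
        have hps : p ≠ s := Fin.ne_of_val_ne (by omega)
        set G2 : Fin (n + 1) → ℤ → ℤ := Function.update g0 s (fun x => - wI a b x) with hG2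
        have hfin2 : ∀ r, (Function.support (G2 r)).Finite :=
          update_support_finite hfin0 hfinn
        have hGfun : (fun t => wI (adjSwap s k t.castSucc) (adjSwap s k t.succ)) =
            Function.update G2 p (fun x => g0 p x + wI a b (x - 1)) := by
          funext t
          have htlt := t.isLt
          have this1 := hval t
          rw [show (fun x => wI (adjSwap s k t.castSucc) (adjSwap s k t.succ) x) =
            wI (adjSwap s k t.castSucc) (adjSwap s k t.succ) from rfl] at this1
          rw [this1]
          by_cases h2 : t = p
          · rw [h2, Function.update_self, if_neg hps, if_pos (by omega), hpdef]
          · rw [Function.update_of_ne h2]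
            by_cases h3 : t = s
            · rw [h3, hG2, Function.update_self, if_pos rfl]
            · rw [hG2, Function.update_of_ne h3, if_neg h3,
                if_neg (fun hv => h2 (Fin.ext (by omega))), if_neg (by omega)]
        rw [hGfun]
        have hG2s : G2 s = fun x => - wI a b x := by rw [hG2, Function.update_self]
        rw [Sg_split_p IH G2 hfin2 s p (by omega) (by omega) a b hG2s
          (g0 p) _ (hfin0 p) (fun x => rfl)]
        have e2 : Function.update G2 p (g0 p) = G2 := by
          have hp1 : g0 p = G2 p := by rw [hG2, Function.update_of_ne hps]
          rw [hp1, Function.update_eq_self]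
        rw [e2, hG2, Sg_update_neg' g0 s (wI a b) _ (fun x => rfl), ← hg0s,
          Function.update_eq_self]
    · by_cases hsq : s.1 < n
      · -- only the `q` neighbour present (s.1 = 0)
        set q : Fin (n + 1) := ⟨s.1 + 1, by omega⟩ with hqdef
        have hqval : (q : ℕ) = s.1 + 1 := rfl
        have hqs : q ≠ s := Fin.ne_of_val_ne (by omega)
        set G2 : Fin (n + 1) → ℤ → ℤ := Function.update g0 s (fun x => - wI a b x) with hG2
        have hfin2 : ∀ r, (Function.support (G2 r)).Finite :=
          update_support_finite hfin0 hfinn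
        have hGfun : (fun t => wI (adjSwap s k t.castSucc) (adjSwap s k t.succ)) =
            Function.update G2 q (fun x => g0 q x + wI a b (x + 1)) := by
          funext t
          have htlt := t.isLt
          have this1 := hval t
          rw [show (fun x => wI (adjSwap s k t.castSucc) (adjSwap s k t.succ) x) =
            wI (adjSwap s k t.castSucc) (adjSwap s k t.succ) from rfl] at this1
          rw [this1]
          by_cases h1 : t = q
          · rw [h1, Function.update_self, if_neg hqs, if_neg (by omega), if_pos (by omega),
              hqdef]
          · rw [Function.update_of_ne h1]
            by_cases h3 : t = s
            · rw [h3, hG2, Function.update_self, if_pos rfl]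
            · rw [hG2, Function.update_of_ne h3, if_neg h3, if_neg (by omega),
                if_neg (fun hv => h1 (Fin.ext (by omega)))]
        rw [hGfun]
        have hG2s : G2 s = fun x => - wI a b x := by rw [hG2, Function.update_self]
        rw [Sg_split_q IH G2 hfin2 s q hqval hsq a b hG2s (g0 q) _ (hfin0 q) (fun x => rfl)]
        have e1 : Function.update G2 q (g0 q) = G2 := by
          have hq1 : g0 q = G2 q := by rw [hG2, Function.update_of_ne hqs]
          rw [hq1, Function.update_eq_self]
        rw [e1, hG2, Sg_update_neg' g0 s (wI a b) _ (fun x => rfl), ← hg0s,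
          Function.update_eq_self]
      · -- no neighbours (n = 0)
        have hGfun : (fun t => wI (adjSwap s k t.castSucc) (adjSwap s k t.succ)) =
            Function.update g0 s (fun x => - wI a b x) := by
          funext t
          have htlt := t.isLt
          have this1 := hval t
          rw [show (fun x => wI (adjSwap s k t.castSucc) (adjSwap s k t.succ) x) =
            wI (adjSwap s k t.castSucc) (adjSwap s k t.succ) from rfl] at this1
          rw [this1]
          by_cases h3 : t = s
          · rw [h3, Function.update_self, if_pos rfl]
          · rw [Function.update_of_ne h3, if_neg h3, if_neg (by omega), if_neg (by omega)]
        rw [hGfun, Sg_update_neg' g0 s (wI a b) _ (fun x => rfl), ← hg0s,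
          Function.update_eq_self]
noncomputable def Nf (n : ℕ) (m : Fin (n + 1) → ℤ) : ℤ :=
  Lrec n (fun t => m t - t.1)

lemma Nf_adjacent {n : ℕ} (s : Fin n) (m : Fin (n + 1) → ℤ) :
    Nf n (m ∘ Equiv.swap s.castSucc s.succ) = - Nf n m := by
  have key : (fun t : Fin (n + 1) => (m ∘ Equiv.swap s.castSucc s.succ) t - t.1) =
      adjSwap s (fun t => m t - t.1) := by
    funext t
    by_cases h1 : t = s.castSucc
    · rw [h1]
      simp only [Function.comp_apply, Equiv.swap_apply_left]
      rw [adjSwap_apply_val_eq s _ s.castSucc (by simp)]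
      simp [Fin.val_succ]
      ring
    · by_cases h2 : t = s.succ
      · rw [h2]
        simp only [Function.comp_apply, Equiv.swap_apply_right]
        rw [adjSwap_apply_val_eq' s _ s.succ (by simp [Fin.val_succ])]
        simp [Fin.val_succ]
        ring
      · simp only [Function.comp_apply, Equiv.swap_apply_of_ne_of_ne h1 h2]
        rw [adjSwap_apply_other s _ t (fun hv => h1 (Fin.ext (by simpa using hv)))
          (fun hv => h2 (Fin.ext (by simpa [Fin.val_succ] using hv)))]
  unfold Nf
  rw [key]
  exact Lrec_adjSwap n s _

lemma Nf_swap_lt : ∀ (d : ℕ) {n : ℕ} (i j : Fin (n + 1)), i.1 < j.1 → j.1 - i.1 = d + 1 →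
    ∀ m : Fin (n + 1) → ℤ, Nf n (m ∘ Equiv.swap i j) = - Nf n m := by
  intro d
  induction d with
  | zero =>
    intro n i j hij hd m
    have hin : i.1 < n := by have := j.isLt; omega
    set s : Fin n := ⟨i.1, hin⟩ with hs
    have e1 : s.castSucc = i := Fin.ext rfl
    have e2 : s.succ = j := Fin.ext (by rw [Fin.val_succ]; show i.1 + 1 = j.1; omega)
    rw [← e1, ← e2]
    exact Nf_adjacent s m
  | succ d IHd =>
    intro n i j hij hd m
    have hjn : j.1 ≤ n := by omega
    set j0 : Fin (n + 1) := ⟨j.1 - 1, by omega⟩ with hj0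
    have hj0val : (j0 : ℕ) = j.1 - 1 := rfl
    have hij0 : i.1 < j0.1 := by omega
    have hd0 : j0.1 - i.1 = d + 1 := by omega
    have hine : i ≠ j0 := Fin.ne_of_val_ne (by omega)
    have hinej : i ≠ j := Fin.ne_of_val_ne (by omega)
    have hj0j : j0 ≠ j := Fin.ne_of_val_ne (by omega)
    set σ : Equiv.Perm (Fin (n + 1)) := Equiv.swap j0 j with hσ
    have hswapid : Equiv.swap i j = σ * Equiv.swap i j0 * σ⁻¹ := by
      have h1 := Equiv.swap_apply_apply σ i j0
      have h2 : σ i = i := Equiv.swap_apply_of_ne_of_ne hine hinej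
      have h3 : σ j0 = j := Equiv.swap_apply_left j0 j
      rw [h2, h3] at h1
      exact h1
    have hσinv : σ⁻¹ = σ := Equiv.swap_inv j0 j
    have hcomp : m ∘ ⇑(Equiv.swap i j) = ((m ∘ ⇑σ) ∘ ⇑(Equiv.swap i j0)) ∘ ⇑σ := by
      rw [hswapid, hσinv]
      funext t
      simp [Equiv.Perm.mul_apply]
    rw [hcomp]
    -- σ is an adjacent swap at position j.1 - 1
    set s : Fin n := ⟨j.1 - 1, by omega⟩ with hs
    have e1 : s.castSucc = j0 := Fin.ext rfl
    have e2 : s.succ = j := Fin.ext (by simp [Fin.val_succ]; omega)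
    have hσadj : σ = Equiv.swap s.castSucc s.succ := by rw [e1, e2]
    rw [hσadj]
    rw [Nf_adjacent s ((m ∘ ⇑(Equiv.swap s.castSucc s.succ)) ∘ ⇑(Equiv.swap i j0))]
    rw [← hσadj, IHd i j0 hij0 hd0 (m ∘ ⇑σ), hσadj, Nf_adjacent s m]
    ring

lemma Nf_swap {n : ℕ} (i j : Fin (n + 1)) (hij : i ≠ j) (m : Fin (n + 1) → ℤ) :
    Nf n (m ∘ Equiv.swap i j) = - Nf n m := by
  rcases lt_or_gt_of_ne (fun hv => hij (Fin.ext hv) : i.1 ≠ j.1) with h | h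
  · exact Nf_swap_lt (j.1 - i.1 - 1) i j h (by omega) m
  · rw [Equiv.swap_comm]
    exact Nf_swap_lt (i.1 - j.1 - 1) j i h (by omega) m

theorem Lrec_transpose {n : ℕ} (k : Fin (n + 1) → ℤ) (i j : Fin (n + 1)) (hij : i ≠ j) :
    Lrec n (fun t => if t = i then k j + ((j.1 : ℤ) - (i.1 : ℤ))
      else if t = j then k i + ((i.1 : ℤ) - (j.1 : ℤ)) else k t) = - Lrec n k := by
  have h := Nf_swap i j hij (fun t => k t + t.1)
  unfold Nf at h
  have e1 : (fun t : Fin (n + 1) =>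
      ((fun t : Fin (n + 1) => k t + t.1) ∘ Equiv.swap i j) t - t.1) =
      (fun t => if t = i then k j + ((j.1 : ℤ) - (i.1 : ℤ))
        else if t = j then k i + ((i.1 : ℤ) - (j.1 : ℤ)) else k t) := by
    funext t
    by_cases h1 : t = i
    · subst h1
      simp [Equiv.swap_apply_left, hij]
      try ring
    · by_cases h2 : t = j
      · subst h2
        simp [Equiv.swap_apply_right, Ne.symm hij]
        try ring
      · simp [Equiv.swap_apply_of_ne_of_ne h1 h2, h1, h2]
  have e2 : (fun t : Fin (n + 1) => (fun t : Fin (n + 1) => k t + t.1) t - t.1) = k := by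
    funext t; ring
  rw [e1, e2] at h
  exact h
section Bridge

variable {N : ℕ}

def GTset (M : ℕ) (k : Fin M → ℤ) : Set (∀ i : Fin M, Fin (i.1 + 1) → ℤ) :=
  {a | IsGenGT a ∧ BottomRow a k}

lemma LgenGT_eq_finsum_GTset (M : ℕ) (k : Fin M → ℤ) :
    LgenGT M k = ∑ᶠ a ∈ GTset M k, (-1 : ℤ) ^ genGTInvCount a := rfl

def truncP (a : ∀ i : Fin (N + 2), Fin (i.1 + 1) → ℤ) :
    ∀ i : Fin (N + 1), Fin (i.1 + 1) → ℤ :=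
  fun i j => a ⟨i.1, by omega⟩ j

def extendP (b : ∀ i : Fin (N + 1), Fin (i.1 + 1) → ℤ) (k : Fin (N + 2) → ℤ) :
    ∀ i : Fin (N + 2), Fin (i.1 + 1) → ℤ :=
  fun i => if h : i.1 < N + 1 then fun j => b ⟨i.1, h⟩ j
    else fun j => k ⟨j.1, by have := j.isLt; have := i.isLt; omega⟩

lemma extendP_lt (b : ∀ i : Fin (N + 1), Fin (i.1 + 1) → ℤ) (k : Fin (N + 2) → ℤ)
    (i : Fin (N + 2)) (h : i.1 < N + 1) (j : Fin (i.1 + 1)) :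
    extendP b k i j = b ⟨i.1, h⟩ j := by
  unfold extendP
  rw [dif_pos h]

lemma extendP_last (b : ∀ i : Fin (N + 1), Fin (i.1 + 1) → ℤ) (k : Fin (N + 2) → ℤ)
    (i : Fin (N + 2)) (h : ¬ i.1 < N + 1) (j : Fin (i.1 + 1)) :
    extendP b k i j = k ⟨j.1, by have := j.isLt; have := i.isLt; omega⟩ := by
  unfold extendP
  rw [dif_neg h]

lemma truncP_extendP (b : ∀ i : Fin (N + 1), Fin (i.1 + 1) → ℤ) (k : Fin (N + 2) → ℤ) :
    truncP (extendP b k) = b := by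
  funext i j
  show extendP b k ⟨i.1, _⟩ j = b i j
  rw [extendP_lt b k ⟨i.1, by omega⟩ i.isLt j]

lemma extendP_truncP (a : ∀ i : Fin (N + 2), Fin (i.1 + 1) → ℤ) (k : Fin (N + 2) → ℤ)
    (ha : BottomRow a k) : extendP (truncP a) k = a := by
  funext i j
  by_cases h : i.1 < N + 1
  · rw [extendP_lt _ k i h j]
    rfl
  · rw [extendP_last _ k i h j]
    exact (ha i (by omega) j).symm

end Bridge
section Bridge2

variable {N : ℕ}

def botRow (b : ∀ i : Fin (N + 1), Fin (i.1 + 1) → ℤ) : Fin (N + 1) → ℤ :=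
  fun t => b ⟨N, by omega⟩ t

def Allowed (k : Fin (N + 2) → ℤ) : Set (Fin (N + 1) → ℤ) :=
  {l | ∀ t : Fin (N + 1), wI (k t.castSucc) (k t.succ) (l t) ≠ 0}

noncomputable def dInv (k : Fin (N + 2) → ℤ) : ℕ :=
  (Finset.univ.filter (fun t : Fin (N + 1) => k t.succ < k t.castSucc)).card

lemma wI_ne_zero_iff (a b x : ℤ) :
    wI a b x ≠ 0 ↔ (if a ≤ b then a ≤ x ∧ x ≤ b else b < x ∧ x < a) := by
  unfold wI; split_ifs <;> omega

lemma wI_val_allowed (a b x : ℤ) (h : wI a b x ≠ 0) :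
    wI a b x = if b < a then -1 else 1 := by
  unfold wI at h ⊢; split_ifs at h ⊢ <;> omega

lemma allowed_finite (k : Fin (N + 2) → ℤ) : (Allowed k).Finite := by
  apply (Set.Finite.pi (fun t : Fin (N + 1) =>
    wI_support (k t.castSucc) (k t.succ))).subset
  intro l hl
  exact fun t _ => hl t

lemma PgF_allowed (k : Fin (N + 2) → ℤ) (l : Fin (N + 1) → ℤ) (hl : l ∈ Allowed k) :
    PgF (fun t => wI (k t.castSucc) (k t.succ)) l = (-1 : ℤ) ^ dInv k := by
  unfold PgF
  rw [Finset.prod_congr rfl (fun t _ => wI_val_allowed _ _ _ (hl t))]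
  rw [Finset.prod_ite _ _]
  rw [Finset.prod_const, Finset.prod_const, one_pow, mul_one]
  rfl

lemma support_sub_allowed (k : Fin (N + 2) → ℤ) (X : (Fin (N + 1) → ℤ) → ℤ) :
    (Function.support fun l => PgF (fun t => wI (k t.castSucc) (k t.succ)) l * X l)
      ⊆ Allowed k := by
  intro l hl
  simp only [Function.mem_support] at hl
  have hP : PgF (fun t => wI (k t.castSucc) (k t.succ)) l ≠ 0 :=
    fun h => hl (by rw [h, zero_mul])
  unfold PgF at hP
  rw [Finset.prod_ne_zero_iff] at hP
  exact fun t => hP t (Finset.mem_univ t)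

lemma botRow_eq_of_bottomRow (b : ∀ i : Fin (N + 1), Fin (i.1 + 1) → ℤ)
    (l : Fin (N + 1) → ℤ) (hb : BottomRow b l) : botRow b = l := by
  funext t
  exact hb ⟨N, by omega⟩ rfl t

lemma isGenGT_truncP (a : ∀ i : Fin (N + 2), Fin (i.1 + 1) → ℤ) (ha : IsGenGT a) :
    IsGenGT (truncP a) := by
  intro i hi j
  exact ha ⟨i.1, by omega⟩ (show i.1 + 1 < N + 2 by omega) j

lemma bottomRow_truncP (a : ∀ i : Fin (N + 2), Fin (i.1 + 1) → ℤ) :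
    BottomRow (truncP a) (botRow (truncP a)) := by
  rintro ⟨iv, hlt⟩ hi j
  have hi' : iv + 1 = N + 1 := hi
  have hN : iv = N := by omega
  subst hN
  rfl

lemma allowed_of_mem (k : Fin (N + 2) → ℤ) (a : ∀ i : Fin (N + 2), Fin (i.1 + 1) → ℤ)
    (hga : IsGenGT a) (hba : BottomRow a k) : botRow (truncP a) ∈ Allowed k := by
  intro t
  rw [wI_ne_zero_iff]
  have ht := t.isLt
  have h1 := hga ⟨N, by omega⟩ (show N + 1 < N + 2 by omega) ⟨t.1, t.isLt⟩
  have e1 : a ⟨N + 1, by omega⟩ ⟨t.1, show t.1 < N + 2 by omega⟩ = k t.castSucc :=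
    hba ⟨N + 1, by omega⟩ rfl ⟨t.1, show t.1 < N + 2 by omega⟩
  have e2 : a ⟨N + 1, by omega⟩ ⟨t.1 + 1, show t.1 + 1 < N + 2 by omega⟩ = k t.succ :=
    hba ⟨N + 1, by omega⟩ rfl ⟨t.1 + 1, show t.1 + 1 < N + 2 by omega⟩
  rw [e1, e2] at h1
  exact h1

end Bridge2
section Bridge3

variable {N : ℕ}

lemma mem_GTset_extendP (k : Fin (N + 2) → ℤ) (l : Fin (N + 1) → ℤ)
    (b : ∀ i : Fin (N + 1), Fin (i.1 + 1) → ℤ) (hb : b ∈ GTset (N + 1) l)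
    (hl : l ∈ Allowed k) : extendP b k ∈ GTset (N + 2) k := by
  obtain ⟨hgb, hbb⟩ := hb
  constructor
  · intro i hi j
    have hj : j.1 < i.1 + 1 := j.isLt
    by_cases h : i.1 + 1 < N + 1
    · have key := hgb ⟨i.1, by omega⟩ (show i.1 + 1 < N + 1 from h) j
      have r1 : ∀ jj : Fin (i.1 + 1 + 1), extendP b k ⟨i.1 + 1, hi⟩ jj =
          b ⟨i.1 + 1, h⟩ jj := fun jj => extendP_lt b k ⟨i.1 + 1, hi⟩ h jj
      have r2 : extendP b k i j = b ⟨i.1, by omega⟩ j :=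
        extendP_lt b k i (by omega) j
      rw [r1, r1, r2]
      exact key
    · have hiN : i.1 = N := by omega
      have r1 : ∀ jj : Fin (i.1 + 1 + 1), extendP b k ⟨i.1 + 1, hi⟩ jj =
          k ⟨jj.1, show jj.1 < N + 2 by
            have h1 : jj.1 < i.1 + 1 + 1 := jj.isLt; omega⟩ :=
        fun jj => extendP_last b k ⟨i.1 + 1, hi⟩ (show ¬(i.1 + 1 < N + 1) by omega) jj
      have r2 : extendP b k i j = l ⟨j.1, show j.1 < N + 1 by omega⟩ := by
        rw [extendP_lt b k i (by omega) j]
        exact hbb ⟨i.1, by omega⟩ (show i.1 + 1 = N + 1 by omega) j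
      rw [r1, r1, r2]
      have key := hl ⟨j.1, show j.1 < N + 1 by omega⟩
      rw [wI_ne_zero_iff] at key
      exact key
  · intro i hi j
    exact extendP_last b k i (by omega) j

lemma GTset_eq_image (k : Fin (N + 2) → ℤ) :
    GTset (N + 2) k = (fun b => extendP b k) '' (⋃ l ∈ Allowed k, GTset (N + 1) l) := by
  ext a
  constructor
  · rintro ⟨hga, hba⟩
    refine ⟨truncP a, ?_, extendP_truncP a k hba⟩
    apply Set.mem_biUnion (allowed_of_mem k a hga hba)
    exact ⟨isGenGT_truncP a hga, bottomRow_truncP a⟩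
  · rintro ⟨b, hbmem, rfl⟩
    rw [Set.mem_iUnion₂] at hbmem
    obtain ⟨l, hl, hb⟩ := hbmem
    exact mem_GTset_extendP k l b hb hl

lemma extendP_injective (k : Fin (N + 2) → ℤ) :
    Function.Injective (fun b : ∀ i : Fin (N + 1), Fin (i.1 + 1) → ℤ => extendP b k) := by
  intro b1 b2 h
  rw [← truncP_extendP b1 k, ← truncP_extendP b2 k]
  simp only at h
  rw [h]

lemma invCount_extendP (b : ∀ i : Fin (N + 1), Fin (i.1 + 1) → ℤ) (k : Fin (N + 2) → ℤ) :
    genGTInvCount (extendP b k) = dInv k + genGTInvCount b := by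
  unfold genGTInvCount
  rw [Fin.sum_univ_castSucc (n := N + 1)]
  rw [dif_neg (show ¬((Fin.last (N + 1)).1 + 1 < N + 2) by rw [Fin.val_last]; omega),
    add_zero]
  have step : ∀ i : Fin (N + 1),
      (if hi : (i.castSucc).1 + 1 < N + 2 then
        (Finset.univ.filter (fun j : Fin ((i.castSucc).1 + 1) =>
          extendP b k ⟨(i.castSucc).1 + 1, hi⟩
              ⟨j.1 + 1, by have := j.isLt; show j.1 + 1 < (i.castSucc).1 + 1 + 1; omega⟩ <
            extendP b k ⟨(i.castSucc).1 + 1, hi⟩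
              ⟨j.1, by have := j.isLt; show j.1 < (i.castSucc).1 + 1 + 1; omega⟩)).card
        else 0) =
      (if i.1 = N then dInv k else 0) +
      (if hi : i.1 + 1 < N + 1 then
        (Finset.univ.filter (fun j : Fin (i.1 + 1) =>
          b ⟨i.1 + 1, hi⟩ ⟨j.1 + 1, by have := j.isLt; show j.1 + 1 < i.1 + 1 + 1; omega⟩ <
            b ⟨i.1 + 1, hi⟩ ⟨j.1, by have := j.isLt; show j.1 < i.1 + 1 + 1; omega⟩)).card
        else 0) := by
    rintro ⟨iv, hivlt⟩
    simp only [Fin.coe_castSucc]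
    by_cases hiN : iv = N
    · subst hiN
      rw [dif_pos (show iv + 1 < iv + 2 by omega), dif_neg (show ¬(iv + 1 < iv + 1) by omega),
        if_pos (show ((⟨iv, hivlt⟩ : Fin (iv + 1)) : ℕ) = iv from rfl), add_zero]
      unfold dInv
      congr 1
      apply Finset.filter_congr
      intro j _
      rw [extendP_last b k ⟨iv + 1, show iv + 1 < iv + 2 by omega⟩
          (show ¬(iv + 1 < iv + 1) by omega),
        extendP_last b k ⟨iv + 1, show iv + 1 < iv + 2 by omega⟩
          (show ¬(iv + 1 < iv + 1) by omega)]
      exact Iff.rfl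
    · have hlt : iv + 1 < N + 1 := by omega
      rw [dif_pos (show iv + 1 < N + 2 by omega),
        if_neg (show ¬(((⟨iv, hivlt⟩ : Fin (N + 1)) : ℕ) = N) from hiN), dif_pos hlt,
        zero_add]
      congr 1
      apply Finset.filter_congr
      intro j _
      rw [extendP_lt b k ⟨iv + 1, show iv + 1 < N + 2 by omega⟩ hlt,
        extendP_lt b k ⟨iv + 1, show iv + 1 < N + 2 by omega⟩ hlt]
  rw [Finset.sum_congr rfl (fun i _ => step i), Finset.sum_add_distrib]
  have hsingle : (∑ i : Fin (N + 1), if (i : ℕ) = N then dInv k else 0) = dInv k := by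
    rw [Finset.sum_eq_single_of_mem (⟨N, by omega⟩ : Fin (N + 1)) (Finset.mem_univ _)
      (fun i _ hne => if_neg (fun hv => hne (Fin.ext hv)))]
    exact if_pos rfl
  rw [hsingle]

end Bridge3
section Bridge4

lemma finsum_mem_mul_left {α : Type*} (c : ℤ) (S : Set α) (hS : S.Finite) (f : α → ℤ) :
    (∑ᶠ a ∈ S, c * f a) = c * ∑ᶠ a ∈ S, f a := by
  rw [finsum_mem_eq_finite_toFinset_sum _ hS, finsum_mem_eq_finite_toFinset_sum _ hS,
    Finset.mul_sum]

lemma GTset_one (k : Fin 1 → ℤ) :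
    GTset 1 k = {fun i j => k ⟨j.1, by have := j.isLt; have := i.isLt; omega⟩} := by
  ext a
  constructor
  · rintro ⟨hg, hb⟩
    funext i j
    exact hb i (by have := i.isLt; omega) j
  · rintro rfl
    constructor
    · intro i hi j
      exact absurd hi (by omega)
    · intro i hi j
      rfl

lemma LgenGT_one (k : Fin 1 → ℤ) : LgenGT 1 k = 1 := by
  rw [LgenGT_eq_finsum_GTset, GTset_one k, finsum_mem_singleton]
  have h0 : genGTInvCount (fun (i : Fin 1) (j : Fin (i.1 + 1)) =>
      k ⟨j.1, by have := j.isLt; have := i.isLt; omega⟩) = 0 := by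
    unfold genGTInvCount
    exact Finset.sum_eq_zero (fun i _ => dif_neg (by have := i.isLt; omega))
  rw [h0, pow_zero]

lemma GTset_finite_and_eq : ∀ (N : ℕ) (k : Fin (N + 1) → ℤ),
    (GTset (N + 1) k).Finite ∧ LgenGT (N + 1) k = Lrec N k := by
  intro N
  induction N with
  | zero =>
    intro k
    refine ⟨by rw [GTset_one k]; exact Set.finite_singleton _, ?_⟩
    rw [LgenGT_one k]
    rfl
  | succ N IH =>
    intro k
    have hAf : (Allowed k).Finite := allowed_finite k
    have hUf : (⋃ l ∈ Allowed k, GTset (N + 1) l).Finite :=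
      Set.Finite.biUnion hAf (fun l _ => (IH l).1)
    have hdisj : (Allowed k).PairwiseDisjoint (fun l => GTset (N + 1) l) := by
      intro l1 h1 l2 h2 hne
      rw [Function.onFun, Set.disjoint_left]
      intro b hb1 hb2
      exact hne ((botRow_eq_of_bottomRow b l1 hb1.2).symm.trans
        (botRow_eq_of_bottomRow b l2 hb2.2))
    constructor
    · rw [GTset_eq_image k]
      exact hUf.image _
    · have step1 : LgenGT (N + 2) k =
          ∑ᶠ b ∈ (⋃ l ∈ Allowed k, GTset (N + 1) l),
            (-1 : ℤ) ^ genGTInvCount (extendP b k) := by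
        rw [LgenGT_eq_finsum_GTset, GTset_eq_image k]
        exact finsum_mem_image (fun x _ y _ h => extendP_injective k h)
      have step2 : (∑ᶠ b ∈ (⋃ l ∈ Allowed k, GTset (N + 1) l),
            (-1 : ℤ) ^ genGTInvCount (extendP b k)) =
          ∑ᶠ l ∈ Allowed k, ∑ᶠ b ∈ GTset (N + 1) l,
            (-1 : ℤ) ^ dInv k * (-1 : ℤ) ^ genGTInvCount b := by
        rw [← finsum_mem_biUnion hdisj hAf (fun l _ => (IH l).1)]
        apply finsum_mem_congr rfl
        intro b _
        rw [invCount_extendP b k, pow_add]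
      have step3 : ∀ l ∈ Allowed k,
          (∑ᶠ b ∈ GTset (N + 1) l, (-1 : ℤ) ^ dInv k * (-1 : ℤ) ^ genGTInvCount b) =
          PgF (fun t => wI (k t.castSucc) (k t.succ)) l * Lrec N l := by
        intro l hl
        rw [finsum_mem_mul_left _ _ ((IH l).1), ← LgenGT_eq_finsum_GTset, (IH l).2,
          PgF_allowed k l hl]
      have step4 : Lrec (N + 1) k =
          ∑ᶠ l ∈ Allowed k, PgF (fun t => wI (k t.castSucc) (k t.succ)) l * Lrec N l := by
        have h0 : Lrec (N + 1) k = ∑ᶠ l : Fin (N + 1) → ℤ,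
            PgF (fun t => wI (k t.castSucc) (k t.succ)) l * Lrec N l := rfl
        rw [h0, ← finsum_mem_univ]
        exact finsum_mem_inter_support_eq' _ _ _
          (fun x hx => by simp only [Set.mem_univ, true_iff]; exact support_sub_allowed k _ hx)
      rw [step1, step2, step4]
      exact finsum_mem_congr rfl step3

end Bridge4
/-- Shift-antisymmetry of the signed enumeration of generalized Gelfand-Tsetlin
patterns: replacing `(k_i, k_j)` by `(k_j + j - i, k_i + i - j)` reverses the sign. -/
theorem gen_gt_pattern_shift_antisymmetry (n : ℕ) (hn : 1 ≤ n) (k : Fin n → ℤ)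
    (i j : Fin n) (hij : i < j) :
    LgenGT n k =
      - LgenGT n (fun t =>
          if t = i then k j + ((j.1 : ℤ) - (i.1 : ℤ))
          else if t = j then k i + ((i.1 : ℤ) - (j.1 : ℤ))
          else k t) := by
  obtain ⟨N, rfl⟩ : ∃ N, n = N + 1 := ⟨n - 1, by omega⟩
  have h1 := (GTset_finite_and_eq N k).2
  have h3 := (GTset_finite_and_eq N (fun t =>
    if t = i then k j + ((j.1 : ℤ) - (i.1 : ℤ))
    else if t = j then k i + ((i.1 : ℤ) - (j.1 : ℤ)) else k t)).2
  have h2 := Lrec_transpose k i j (ne_of_lt hij)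
  rw [h1, h3, h2, neg_neg]
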